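/- Energy positivity implies non-decay: let F : ℝ² → ℝ be C² with F(u,v) > 0 for (u,v) ≠ (0,0) and F(0,0) = 0, and let (u,v) be a bounded nontrivial C² solution of −u'' = ∂_u F(u,v), −v'' = ∂_v F(u,v) on I = ℝ or (0,∞). Then it is not the case that both u(t) → 0 and v(t) → 0 as t → ∞. -/

import Mathlib

open Set Filter

lemma grow19 {f f' : ℝ → ℝ} {T c : ℝ} (hc : 0 < c)
    (hf : ∀ t ∈ Set.Ici T, HasDerivAt f (f' t) t)
    (hd : ∀ t ∈ Set.Ici T, c ≤ f' t) :
    Filter.Tendsto f Filter.atTop Filter.atTop := by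
  have hmono : MonotoneOn (fun s => f s - c * s) (Set.Ici T) := by
    apply monotoneOn_of_deriv_nonneg (convex_Ici T)
    · exact fun s hs => ((hf s hs).continuousAt.sub (by fun_prop)).continuousWithinAt
    · intro s hs
      rw [interior_Ici] at hs
      exact ((hf s (Set.mem_Ici.mpr (le_of_lt (Set.mem_Ioi.mp hs)))).sub ((hasDerivAt_id s).const_mul c)).differentiableAt.differentiableWithinAt
    · intro s hs
      rw [interior_Ici] at hs
      have h1 : HasDerivAt (fun s => f s - c * s) (f' s - c) s := by
        exact ((hf s (Set.mem_Ici.mpr (le_of_lt (Set.mem_Ioi.mp hs)))).sub (((hasDerivAt_id s).const_mul c))).congr_deriv (by ring)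
      rw [h1.deriv]
      linarith [hd s (Set.mem_Ici.mpr (le_of_lt (Set.mem_Ioi.mp hs)))]
  have key : ∀ᶠ t in atTop, f T - c * T + c * t ≤ f t := by
    filter_upwards [eventually_ge_atTop T] with t ht
    have := hmono (self_mem_Ici) (ht : t ∈ Ici T) ht
    simp only at this
    linarith
  refine tendsto_atTop_mono' _ key ?_
  exact tendsto_atTop_add_const_left _ _ (tendsto_id.const_mul_atTop hc)

theorem stmt19 (I : Set ℝ) (hI : I = Set.univ ∨ I = Set.Ioi 0)
    (F : ℝ × ℝ → ℝ) (hF : ContDiff ℝ 2 F) (hF0 : F (0, 0) = 0)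
    (hpos : ∀ z : ℝ × ℝ, z ≠ 0 → 0 < F z)
    (u v u' v' u'' v'' : ℝ → ℝ)
    (hbd : ∃ C, ∀ t ∈ I, |u t| ≤ C ∧ |v t| ≤ C)
    (hu : ∀ t ∈ I, HasDerivAt u (u' t) t) (hu' : ∀ t ∈ I, HasDerivAt u' (u'' t) t)
    (hv : ∀ t ∈ I, HasDerivAt v (v' t) t) (hv' : ∀ t ∈ I, HasDerivAt v' (v'' t) t)
    (hequ : ∀ t ∈ I, -u'' t = fderiv ℝ F (u t, v t) (1, 0))
    (heqv : ∀ t ∈ I, -v'' t = fderiv ℝ F (u t, v t) (0, 1))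
    (hnt : ∃ t ∈ I, (u t, v t) ≠ (0, 0)) :
    ¬ (Filter.Tendsto u Filter.atTop (nhds 0) ∧
       Filter.Tendsto v Filter.atTop (nhds 0)) := by
  rintro ⟨hut, hvt⟩
  obtain ⟨t₀, ht₀I, hnt0⟩ := hnt
  -- basic facts about I
  have hsub : ∀ s t, s ∈ I → t ∈ I → Set.Icc s t ⊆ I := by
    rcases hI with h | h <;> subst h
    · intro _ _ _ _; simp
    · intro s t hs _ x hx; exact lt_of_lt_of_le hs hx.1
  have hev : ∀ᶠ t in atTop, t ∈ I := by
    rcases hI with h | h <;> subst h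
    · simp
    · exact eventually_gt_atTop 0
  have hFdiff : Differentiable ℝ F := hF.differentiable (by norm_num)
  -- derivative of F along the curve
  have hdF : ∀ t ∈ I, HasDerivAt (fun s => F (u s, v s))
      (fderiv ℝ F (u t, v t) (u' t, v' t)) t := by
    intro t ht
    exact (hFdiff (u t, v t)).hasFDerivAt.comp_hasDerivAt t ((hu t ht).prodMk (hv t ht))
  -- energy
  set E : ℝ → ℝ := fun t => u' t ^ 2 / 2 + v' t ^ 2 / 2 + F (u t, v t) with hEdef
  have hE : ∀ t ∈ I, HasDerivAt E 0 t := by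
    intro t ht
    have h1 : HasDerivAt (fun s => u' s ^ 2 / 2) (u' t * u'' t) t := by
      have := ((hu' t ht).pow 2).div_const 2
      exact this.congr_deriv (by ring)
    have h2 : HasDerivAt (fun s => v' s ^ 2 / 2) (v' t * v'' t) t := by
      have := ((hv' t ht).pow 2).div_const 2
      exact this.congr_deriv (by ring)
    have h3 := hdF t ht
    have hsplit : fderiv ℝ F (u t, v t) (u' t, v' t)
        = u' t * fderiv ℝ F (u t, v t) (1, 0) + v' t * fderiv ℝ F (u t, v t) (0, 1) := by
      have : (u' t, v' t) = u' t • ((1:ℝ), (0:ℝ)) + v' t • ((0:ℝ), (1:ℝ)) := by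
        simp [Prod.ext_iff]
      rw [this, map_add, map_smul, map_smul]; simp [smul_eq_mul]
    rw [hsplit, ← hequ t ht, ← heqv t ht] at h3
    have := (h1.add h2).add h3
    exact this.congr_deriv (by ring)
  -- energy is constant to the right of t₀
  have hEconst : ∀ t ∈ I, t₀ ≤ t → E t = E t₀ := by
    intro t ht htt
    have hIcc := hsub t₀ t ht₀I ht
    have hcont : ContinuousOn E (Set.Icc t₀ t) :=
      fun x hx => (hE x (hIcc hx)).continuousAt.continuousWithinAt
    have := constant_of_has_deriv_right_zero hcont
      (fun x hx => (hE x (hIcc ⟨hx.1, hx.2.le⟩)).hasDerivWithinAt)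
    exact this t ⟨htt, le_refl t⟩
  set c₀ := E t₀ with hc₀def
  have hz0 : ((u t₀, v t₀) : ℝ × ℝ) ≠ 0 := by
    simpa [Prod.ext_iff] using hnt0
  have hc₀pos : 0 < c₀ := by
    have := hpos _ hz0
    have h1 := sq_nonneg (u' t₀); have h2 := sq_nonneg (v' t₀)
    rw [hc₀def, hEdef]; dsimp only; nlinarith
  -- limits
  have hγ : Tendsto (fun t => (u t, v t)) atTop (nhds (0 : ℝ × ℝ)) := by
    have := hut.prodMk_nhds hvt
    exact this
  have h00 : F 0 = 0 := by rw [show ((0 : ℝ × ℝ)) = (0, 0) from rfl]; exact hF0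
  have hFlim : Tendsto (fun t => F (u t, v t)) atTop (nhds 0) := by
    have := (hFdiff.continuous.tendsto (0 : ℝ × ℝ)).comp hγ
    simpa [Function.comp_def, h00] using this
  have hgrad0 : fderiv ℝ F 0 = 0 := by
    apply IsLocalMin.fderiv_eq_zero
    refine Filter.Eventually.of_forall fun z => ?_
    rcases eq_or_ne z 0 with rfl | hz
    · exact le_rfl
    · rw [h00]; exact (hpos z hz).le
  -- second derivatives tend to 0
  have hfdlim : Tendsto (fun t => fderiv ℝ F (u t, v t)) atTop (nhds 0) := by
    have := ((hF.continuous_fderiv (by norm_num)).tendsto (0 : ℝ × ℝ)).comp hγ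
    simpa [Function.comp_def, hgrad0] using this
  have happly : ∀ w : ℝ × ℝ, Tendsto (fun t => fderiv ℝ F (u t, v t) w) atTop (nhds 0) := by
    intro w
    have := ((ContinuousLinearMap.apply ℝ ℝ w).continuous.tendsto 0).comp hfdlim
    simpa [Function.comp_def] using this
  have hu''lim : Tendsto u'' atTop (nhds 0) := by
    have h1 := (happly (1, 0)).neg
    rw [neg_zero] at h1
    refine h1.congr' ?_
    filter_upwards [hev] with t ht
    have := hequ t ht; linarith
  have hv''lim : Tendsto v'' atTop (nhds 0) := by
    have h1 := (happly (0, 1)).neg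
    rw [neg_zero] at h1
    refine h1.congr' ?_
    filter_upwards [hev] with t ht
    have := heqv t ht; linarith
  -- kinetic energy tends to 2c₀
  have hKlim : Tendsto (fun t => u' t ^ 2 + v' t ^ 2) atTop (nhds (2 * c₀)) := by
    have h1 : Tendsto (fun t => 2 * (c₀ - F (u t, v t))) atTop (nhds (2 * c₀)) := by
      have := ((tendsto_const_nhds (x := c₀)).sub hFlim).const_mul 2
      simpa using this
    refine h1.congr' ?_
    filter_upwards [hev, eventually_ge_atTop t₀] with t ht htt
    have := hEconst t ht htt
    rw [hEdef] at this; dsimp only at this; linear_combination (-2 : ℝ) * this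
  -- h = u² + v² and its derivatives
  set g : ℝ → ℝ := fun t => u t ^ 2 + v t ^ 2 with hgdef
  set g' : ℝ → ℝ := fun t => 2 * (u t * u' t + v t * v' t) with hg'def
  set g'' : ℝ → ℝ := fun t =>
    2 * (u' t ^ 2 + v' t ^ 2 + (u t * u'' t + v t * v'' t)) with hg''def
  have hg : ∀ t ∈ I, HasDerivAt g (g' t) t := by
    intro t ht
    have := ((hu t ht).pow 2).add ((hv t ht).pow 2)
    exact this.congr_deriv (by simp only [hg'def]; ring)
  have hg' : ∀ t ∈ I, HasDerivAt g' (g'' t) t := by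
    intro t ht
    have := (((hu t ht).mul (hu' t ht)).add ((hv t ht).mul (hv' t ht))).const_mul 2
    exact this.congr_deriv (by simp only [hg''def]; ring)
  have hg''lim : Tendsto g'' atTop (nhds (2 * (2 * c₀))) := by
    have h1 : Tendsto (fun t => u t * u'' t + v t * v'' t) atTop (nhds 0) := by
      have := (hut.mul hu''lim).add (hvt.mul hv''lim); simpa using this
    have := (hKlim.add h1).const_mul 2
    simpa using this
  -- eventually g'' ≥ 2c₀
  have hevg'' : ∀ᶠ t in atTop, 2 * c₀ ≤ g'' t := by
    apply hg''lim.eventually (eventually_ge_nhds (by linarith))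
  obtain ⟨T, hT⟩ := (hevg''.and hev).exists_forall_of_atTop
  have hg'top : Tendsto g' atTop atTop := by
    refine grow19 (by linarith : (0:ℝ) < 2 * c₀)
      (fun t ht => hg' t (hT t ht).2) (fun t ht => (hT t ht).1)
  have hevg' : ∀ᶠ t in atTop, (1:ℝ) ≤ g' t := hg'top.eventually_ge_atTop 1
  obtain ⟨S, hS⟩ := (hevg'.and hev).exists_forall_of_atTop
  have hgtop : Tendsto g atTop atTop :=
    grow19 one_pos (fun t ht => hg t (hS t ht).2) (fun t ht => (hS t ht).1)
  have hglim : Tendsto g atTop (nhds 0) := by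
    have := (hut.mul hut).add (hvt.mul hvt)
    simp only [mul_zero, add_zero] at this
    refine this.congr fun t => by rw [hgdef]; ring
  exact not_tendsto_atTop_of_tendsto_nhds hglim hgtop
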